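/- Let G = (A, N, ∂₀, ∂₁) be a directed graph. Define L(G) to have arc set N, node set (N × {0,1})/∼, where ∼ is the equivalence relation generated by (x,1) ∼ (y,0) whenever there exists an arc f with ∂₀(f) = x and ∂₁(f) = y, with source and target maps x ↦ [(x,0)] and x ↦ [(x,1)]. Define R(G) (the line graph) to have node set A, arc set {(f,g) ∈ A × A : ∂₁(f) = ∂₀(g)}, with source (f,g) ↦ f and target (f,g) ↦ g. Then L and R extend to functors on the category of directed graphs and L is left adjoint to R. -/

import Mathlib

open CategoryTheory

/-- A directed network: arcs `A`, nodes `N`, and source/target maps. -/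
structure DiGraph where
  A : Type
  N : Type
  s : A → N
  t : A → N

/-- A homomorphism of directed networks. -/
@[ext]
structure DiGraphHom (G H : DiGraph) where
  onA : G.A → H.A
  onN : G.N → H.N
  comm_s : ∀ a, H.s (onA a) = onN (G.s a)
  comm_t : ∀ a, H.t (onA a) = onN (G.t a)

instance : Category DiGraph where
  Hom := DiGraphHom
  id G := ⟨fun a => a, fun x => x, fun _ => rfl, fun _ => rfl⟩
  comp f g := ⟨fun a => g.onA (f.onA a), fun x => g.onN (f.onN x),
    fun a => by rw [g.comm_s, f.comm_s], fun a => by rw [g.comm_t, f.comm_t]⟩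
  id_comp f := rfl
  comp_id f := rfl
  assoc f g h := rfl

/-- The generating relation on `N × {0,1}`: `(x,1) r (y,0)` iff there is an arc from `x` to `y`.
Taking `Quot` of this relation quotients by the equivalence relation it generates. -/
def condenseRel (G : DiGraph) : G.N × Bool → G.N × Bool → Prop :=
  fun p q => p.2 = true ∧ q.2 = false ∧ ∃ f : G.A, G.s f = p.1 ∧ G.t f = q.1

/-- The network transformation `L` on objects: arcs are the nodes of `G`, nodes are
`(N × {0,1})/∼`, source `x ↦ [(x,0)]`, target `x ↦ [(x,1)]`. -/
def condense (G : DiGraph) : DiGraph where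
  A := G.N
  N := Quot (condenseRel G)
  s := fun x => Quot.mk _ (x, false)
  t := fun x => Quot.mk _ (x, true)

/-- The network transformation `R` on objects: the line graph of `G`. -/
def lineGraph (G : DiGraph) : DiGraph where
  A := { p : G.A × G.A // G.t p.1 = G.s p.2 }
  N := G.A
  s := fun p => p.1.1
  t := fun p => p.1.2

def Lfun : DiGraph ⥤ DiGraph where
  obj := condense
  map {G H} φ :=
    { onA := φ.onN
      onN := Quot.map (fun p => (φ.onN p.1, p.2)) (by
        rintro ⟨x, bx⟩ ⟨y, by'⟩ ⟨hx, hy, f, hf1, hf2⟩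
        exact ⟨hx, hy, φ.onA f, by rw [φ.comm_s, hf1], by rw [φ.comm_t, hf2]⟩)
      comm_s := fun a => rfl
      comm_t := fun a => rfl }
  map_id G :=
    DiGraphHom.ext rfl (by funext q; induction q using Quot.ind; rfl)
  map_comp f g :=
    DiGraphHom.ext rfl (by funext q; induction q using Quot.ind; rfl)

def Rfun : DiGraph ⥤ DiGraph where
  obj := lineGraph
  map {G H} φ :=
    { onA := fun p => ⟨(φ.onA p.1.1, φ.onA p.1.2), by
        rw [φ.comm_t, φ.comm_s, p.2]⟩
      onN := φ.onA
      comm_s := fun a => rfl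
      comm_t := fun a => rfl }
  map_id G := rfl
  map_comp f g := rfl

def fwd {G H : DiGraph} (ψ : Lfun.obj G ⟶ H) : G ⟶ Rfun.obj H where
  onN := ψ.onA
  onA := fun a => ⟨(ψ.onA (G.s a), ψ.onA (G.t a)), by
    refine (ψ.comm_t (G.s a)).trans (Eq.trans ?_ (ψ.comm_s (G.t a)).symm)
    exact congrArg ψ.onN (Quot.sound ⟨rfl, rfl, a, rfl, rfl⟩)⟩
  comm_s := fun a => rfl
  comm_t := fun a => rfl

def bwd {G H : DiGraph} (φ : G ⟶ Rfun.obj H) : Lfun.obj G ⟶ H where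
  onA := φ.onN
  onN := Quot.lift (fun p => if p.2 then H.t (φ.onN p.1) else H.s (φ.onN p.1)) (by
    rintro ⟨x, bx⟩ ⟨y, by'⟩ ⟨hx, hy, f, hf1, hf2⟩
    subst hx hy hf1 hf2
    simp only [if_true, if_false]
    have h1 := φ.comm_s f
    have h2 := φ.comm_t f
    have h3 := (φ.onA f).2
    change (φ.onA f).1.1 = φ.onN (G.s f) at h1
    change (φ.onA f).1.2 = φ.onN (G.t f) at h2
    rw [← h1, ← h2]
    exact h3)
  comm_s := fun a => rfl
  comm_t := fun a => rfl

def myAdj : Lfun ⊣ Rfun :=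
  Adjunction.mkOfHomEquiv
    { homEquiv := fun G H =>
        { toFun := fwd
          invFun := bwd
          left_inv := fun ψ => by
            refine DiGraphHom.ext rfl (funext fun q => ?_)
            induction q using Quot.ind with
            | _ p =>
              rcases p with ⟨x, b⟩
              cases b
              · show H.s (ψ.onA x) = ψ.onN (Quot.mk _ (x, false))
                exact ψ.comm_s x
              · show H.t (ψ.onA x) = ψ.onN (Quot.mk _ (x, true))
                exact ψ.comm_t x
          right_inv := fun φ => by
            refine DiGraphHom.ext (funext fun a => ?_) rfl
            apply Subtype.ext
            have h1 := φ.comm_s a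
            have h2 := φ.comm_t a
            change (φ.onA a).1.1 = φ.onN (G.s a) at h1
            change (φ.onA a).1.2 = φ.onN (G.t a) at h2
            exact Prod.ext h1.symm h2.symm }
      homEquiv_naturality_left_symm := fun f g =>
        DiGraphHom.ext rfl (by
          funext q
          induction q using Quot.ind with
          | _ p => cases p.2 <;> rfl)
      homEquiv_naturality_right := fun f g => rfl }

/-- The constructions `L` (condensation) and `R` (line graph) extend to
endofunctors on the category of directed networks, and `L` is left adjoint to `R`. -/
theorem statement3 :
    ∃ (L R : DiGraph ⥤ DiGraph),
      (∀ G : DiGraph, L.obj G = condense G) ∧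
      (∀ G : DiGraph, R.obj G = lineGraph G) ∧
      Nonempty (L ⊣ R) := by
  refine ⟨Lfun, Rfun, fun _ => rfl, fun _ => rfl, ⟨myAdj⟩⟩
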